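/- Let k ≥ 3 be an odd integer and t a positive integer. Let G be any connected simple graph having a cut vertex r such that G − r has exactly k connected components, each containing exactly t vertices and each joined to r by exactly one edge. Then the undirected optical index of G is at least k·t^2. -/

import Mathlib

open SimpleGraph

/-- An all-to-all routing in a simple graph `G`: a choice of one path between each
(unordered) pair of vertices. -/
structure Routing {V : Type*} (G : SimpleGraph V) where
  path : ∀ u v : V, G.Walk u v
  isPath : ∀ u v : V, (path u v).IsPath
  symm : ∀ u v : V, path v u = (path u v).reverse

/-- The conflict graph of a routing: vertices are unordered pairs of distinct vertices of `G`
(i.e. the paths of the routing), two of them adjacent iff the corresponding paths share an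
edge. -/
def Routing.conflictGraph {V : Type*} {G : SimpleGraph V} (R : Routing G) :
    SimpleGraph {p : Sym2 V // ¬ p.IsDiag} where
  Adj p q := p ≠ q ∧ ∃ (u v u' v' : V) (e : Sym2 V),
      (p : Sym2 V) = s(u, v) ∧ (q : Sym2 V) = s(u', v') ∧
      e ∈ (R.path u v).edges ∧ e ∈ (R.path u' v').edges
  symm := by
    constructor
    rintro p q ⟨hne, u, v, u', v', e, hp, hq, h1, h2⟩
    exact ⟨hne.symm, u', v', u, v, e, hq, hp, h2, h1⟩
  loopless := by
    constructor
    rintro p ⟨hne, -⟩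
    exact hne rfl

/-- The undirected optical index `w(G)`: the minimum over all all-to-all routings `R`
of the chromatic number of the conflict graph `Q(R)`. -/
noncomputable def opticalIndex {V : Type*} (G : SimpleGraph V) : ℕ :=
  sInf {n | ∃ R : Routing G, R.conflictGraph.Colorable n}

/-- The load of an edge `e` under a routing: the number of paths of the routing
containing `e`. -/
noncomputable def Routing.load {V : Type*} {G : SimpleGraph V} (R : Routing G)
    (e : Sym2 V) : ℕ :=
  Nat.card {p : {p : Sym2 V // ¬ p.IsDiag} //
    ∃ u v : V, (p : Sym2 V) = s(u, v) ∧ e ∈ (R.path u v).edges}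

/-- The edge-forwarding index `π(G)`: the minimum over all all-to-all routings of the
maximum edge load. -/
noncomputable def forwardingIndex {V : Type*} (G : SimpleGraph V) : ℕ :=
  sInf {n | ∃ R : Routing G, ∀ e ∈ G.edgeSet, R.load e ≤ n}

/-- The complete `m`-ary tree of height `h`: vertices are words over `Fin m` of length
at most `h` (the root is the empty word), a vertex being adjacent to its parent. -/
def completeMAryTree (m h : ℕ) : SimpleGraph {l : List (Fin m) // l.length ≤ h} where
  Adj x y := (∃ a : Fin m, x.val = a :: y.val) ∨ (∃ a : Fin m, y.val = a :: x.val)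
  symm := ⟨fun x y hxy => Or.symm hxy⟩
  loopless := by
    constructor
    rintro x (⟨a, ha⟩ | ⟨a, ha⟩) <;> exact List.cons_ne_self a x.val ha.symm

/-- The tree `D_{m,h}`: two disjoint copies of the complete `m`-ary tree of height `h-1`
with an edge joining the two roots. -/
def doubleMAryTree (m h : ℕ) :
    SimpleGraph (Bool × {l : List (Fin m) // l.length ≤ h - 1}) where
  Adj x y := (x.1 = y.1 ∧ ((∃ a : Fin m, x.2.val = a :: y.2.val) ∨
      (∃ a : Fin m, y.2.val = a :: x.2.val)))
    ∨ (x.1 ≠ y.1 ∧ x.2.val = [] ∧ y.2.val = [])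
  symm := by
    constructor
    rintro x y (⟨hb, hxy⟩ | ⟨hb, h1, h2⟩)
    · exact Or.inl ⟨hb.symm, Or.symm hxy⟩
    · exact Or.inr ⟨hb.symm, h2, h1⟩
  loopless := by
    constructor
    rintro x (⟨-, (⟨a, ha⟩ | ⟨a, ha⟩)⟩ | ⟨hb, -⟩)
    · exact List.cons_ne_self a _ ha.symm
    · exact List.cons_ne_self a _ ha.symm
    · exact hb rfl

section Aux
variable {V : Type*} {G : SimpleGraph V} {r : V}

lemma bridge_mem_walk_aux
    (b : (G.induce {v | v ≠ r}).ConnectedComponent → {v : V // v ≠ r})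
    (hb : ∀ v : {v : V // v ≠ r}, G.Adj r v.val →
      b ((G.induce {v | v ≠ r}).connectedComponentMk v) = v) :
    ∀ {x : V} (p : G.Walk x r) (hx : x ≠ r),
      s(r, (b ((G.induce {v | v ≠ r}).connectedComponentMk ⟨x, hx⟩)).val) ∈ p.edges := by
  intro x p
  induction p with
  | nil => exact fun hx => absurd rfl hx
  | @cons x z w h q ih =>
    rename_i b
    intro hx
    by_cases hz : z = w
    · subst hz
      have hbx : b ((G.induce {v | v ≠ z}).connectedComponentMk ⟨x, hx⟩) = ⟨x, hx⟩ :=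
        hb ⟨x, hx⟩ h.symm
      rw [hbx]
      simp [Sym2.eq_swap]
    · have hadj : (G.induce {v | v ≠ w}).Adj ⟨x, hx⟩ ⟨z, hz⟩ := h
      have hcomp : (G.induce {v | v ≠ w}).connectedComponentMk ⟨x, hx⟩ =
          (G.induce {v | v ≠ w}).connectedComponentMk ⟨z, hz⟩ :=
        ConnectedComponent.sound hadj.reachable
      rw [hcomp]
      exact List.mem_cons_of_mem _ (ih b hb hz)

lemma comp_eq_of_walk_avoid :
    ∀ {x y : V} (p : G.Walk x y), r ∉ p.support → ∀ (hx : x ≠ r) (hy : y ≠ r),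
      (G.induce {v | v ≠ r}).connectedComponentMk ⟨x, hx⟩ =
        (G.induce {v | v ≠ r}).connectedComponentMk ⟨y, hy⟩ := by
  intro x y p
  induction p with
  | nil => intro _ hx hy; rfl
  | @cons x z y h q ih =>
    intro hs hx hy
    rw [SimpleGraph.Walk.support_cons, List.mem_cons] at hs
    push_neg at hs
    have hz : z ≠ r := fun hzr => hs.2 (hzr ▸ q.start_mem_support)
    have hadj : (G.induce {v | v ≠ r}).Adj ⟨x, hx⟩ ⟨z, hz⟩ := h
    rw [ConnectedComponent.sound hadj.reachable]
    exact ih hs.2 hz hy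

lemma bridge_pair_mem
    (b : (G.induce {v | v ≠ r}).ConnectedComponent → {v : V // v ≠ r})
    (hb : ∀ v : {v : V // v ≠ r}, G.Adj r v.val →
      b ((G.induce {v | v ≠ r}).connectedComponentMk v) = v)
    {x y : V} (p : G.Walk x y) (hx : x ≠ r) (hy : y ≠ r)
    (hne : (G.induce {v | v ≠ r}).connectedComponentMk ⟨x, hx⟩ ≠
      (G.induce {v | v ≠ r}).connectedComponentMk ⟨y, hy⟩) :
    s(r, (b ((G.induce {v | v ≠ r}).connectedComponentMk ⟨x, hx⟩)).val) ∈ p.edges ∧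
    s(r, (b ((G.induce {v | v ≠ r}).connectedComponentMk ⟨y, hy⟩)).val) ∈ p.edges := by
  classical
  have hr : r ∈ p.support := by
    by_contra hr
    exact hne (comp_eq_of_walk_avoid p hr hx hy)
  constructor
  · exact SimpleGraph.Walk.edges_takeUntil_subset p hr
      (bridge_mem_walk_aux b hb (p.takeUntil r hr) hx)
  · have := bridge_mem_walk_aux b hb (p.dropUntil r hr).reverse hy
    rw [SimpleGraph.Walk.edges_reverse, List.mem_reverse] at this
    exact SimpleGraph.Walk.edges_dropUntil_subset p hr this

lemma even_card_of_involutive {α : Type*} [Fintype α] [DecidableEq α] (f : α → α)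
    (hf : Function.Involutive f) (hfix : ∀ a, f a ≠ a) : Even (Fintype.card α) := by
  suffices h : ∀ n (s : Finset α), s.card ≤ n → (∀ a ∈ s, f a ∈ s) → Even s.card from
    h _ Finset.univ le_rfl (fun a _ => Finset.mem_univ _)
  intro n
  induction n with
  | zero => intro s hs _; interval_cases h : s.card; exact Even.zero
  | succ n ih =>
    intro s hs hcl
    rcases s.eq_empty_or_nonempty with rfl | ⟨a, ha⟩
    · simp
    · have hfa : f a ∈ s := hcl a ha
      have hne : f a ≠ a := hfix a
      set s' := (s.erase a).erase (f a) with hs'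
      have hmem : ∀ b, b ∈ s' ↔ b ≠ f a ∧ b ≠ a ∧ b ∈ s := by
        intro b; simp [hs', Finset.mem_erase, and_assoc]
      have hcl' : ∀ c ∈ s', f c ∈ s' := by
        intro c hc
        rw [hmem] at hc ⊢
        refine ⟨fun hcc => hc.2.1 (hf.injective hcc), fun hcc => hc.1 (by rw [← hcc, hf]), hcl c hc.2.2⟩
      have h2 : 2 ≤ s.card := Finset.one_lt_card.mpr ⟨a, ha, f a, hfa, hne.symm⟩
      have hcard : s'.card = s.card - 2 := by
        rw [hs', Finset.card_erase_of_mem (Finset.mem_erase.mpr ⟨hne, hfa⟩),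
          Finset.card_erase_of_mem ha]
        omega
      have hev := ih s' (by omega) hcl'
      rw [hcard] at hev
      rcases hev with ⟨m, hm⟩
      exact ⟨m + 1, by omega⟩

end Aux
noncomputable def mkRouting {V : Type*} [DecidableEq V] {G : SimpleGraph V} (hG : G.Connected)
    (f : V → ℕ) (hf : Function.Injective f) : Routing G where
  path u v := if f u ≤ f v then ((hG.preconnected u v).some.toPath : G.Path u v).val
    else ((hG.preconnected v u).some.toPath : G.Path v u).val.reverse
  isPath u v := by
    split
    · exact ((hG.preconnected u v).some.toPath).property
    · exact ((hG.preconnected v u).some.toPath).property.reverse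
  symm u v := by
    rcases lt_trichotomy (f u) (f v) with h | h | h
    · rw [if_pos h.le, if_neg (by omega)]
    · have huv : u = v := hf h
      subst huv
      have hnil := ((hG.preconnected u u).some.toPath).property
      rw [SimpleGraph.Walk.isPath_iff_eq_nil] at hnil
      simp only [if_pos le_rfl, hnil]
      rfl
    · rw [if_pos h.le, if_neg (by omega), SimpleGraph.Walk.reverse_reverse]

lemma routing_set_nonempty {V : Type*} [Fintype V] {G : SimpleGraph V} (hG : G.Connected) :
    {n | ∃ R : Routing G, R.conflictGraph.Colorable n}.Nonempty := by
  classical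
  have hf : Function.Injective (fun v => ((Fintype.equivFin V) v : ℕ)) := by
    intro a b h
    exact (Fintype.equivFin V).injective (Fin.val_injective h)
  letI : Fintype {p : Sym2 V // ¬ p.IsDiag} := Fintype.ofFinite _
  exact ⟨_, mkRouting hG _ hf, SimpleGraph.colorable_of_fintype _⟩


/-- if `k ≥ 3` is odd, `t ≥ 1`, and `G` is a connected simple graph with a
cut vertex `r` such that `G − r` has exactly `k` connected components, each with exactly
`t` vertices and each joined to `r` by exactly one edge, then `w(G) ≥ k·t²`. -/
theorem opticalIndex_G_kt_lower {V : Type*} [Fintype V] (G : SimpleGraph V) (hG : G.Connected)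
    (k t : ℕ) (hk : 3 ≤ k) (hkodd : Odd k) (ht : 1 ≤ t) (r : V)
    (hcomp : Nat.card (G.induce {v | v ≠ r}).ConnectedComponent = k)
    (hsize : ∀ c : (G.induce {v | v ≠ r}).ConnectedComponent, Nat.card c.supp = t)
    (hedge : ∀ c : (G.induce {v | v ≠ r}).ConnectedComponent,
      Nat.card {v : {v : V // v ≠ r} | v ∈ c.supp ∧ G.Adj r v.val} = 1) :
    k * t ^ 2 ≤ opticalIndex G := by
  classical
  -- the bridge vertex of each component
  have hbex : ∀ c : (G.induce {v | v ≠ r}).ConnectedComponent,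
      ∃ x : {v : {v : V // v ≠ r} | v ∈ c.supp ∧ G.Adj r v.val}, ∀ y, y = x := fun c =>
    Nat.card_eq_one_iff_exists.mp (hedge c)
  choose bx hbx using hbex
  set b : (G.induce {v | v ≠ r}).ConnectedComponent → {v : V // v ≠ r} :=
    fun c => (bx c).val with hbdef
  have hb_supp : ∀ c, (G.induce {v | v ≠ r}).connectedComponentMk (b c) = c :=
    fun c => (bx c).2.1
  have hb_uniq : ∀ v : {v : V // v ≠ r}, G.Adj r v.val →
      b ((G.induce {v | v ≠ r}).connectedComponentMk v) = v := by
    intro v hv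
    have hmem : v ∈ {w : {v : V // v ≠ r} |
        w ∈ ((G.induce {v | v ≠ r}).connectedComponentMk v).supp ∧ G.Adj r w.val} :=
      ⟨rfl, hv⟩
    have h := hbx ((G.induce {v | v ≠ r}).connectedComponentMk v) ⟨v, hmem⟩
    exact (congrArg Subtype.val h).symm
  -- the main bound
  refine le_csInf (routing_set_nonempty hG) ?_
  rintro n ⟨R, hcol⟩
  obtain ⟨C⟩ := hcol
  set cmk : {v : V // v ≠ r} → (G.induce {v | v ≠ r}).ConnectedComponent :=
    fun v => (G.induce {v | v ≠ r}).connectedComponentMk v with hcmk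
  have hcross : ∀ u v : {v : V // v ≠ r}, cmk u ≠ cmk v →
      s(r, (b (cmk u)).val) ∈ (R.path u.val v.val).edges := by
    intro u v h
    exact (bridge_pair_mem b hb_uniq (R.path u.val v.val) u.2 v.2 h).1
  set O := {o : ({v : V // v ≠ r} × {v : V // v ≠ r}) // cmk o.1 ≠ cmk o.2} with hO
  have hndiag : ∀ o : O, ¬ (s(o.1.1.val, o.1.2.val) : Sym2 V).IsDiag := by
    intro o hd
    rw [Sym2.mk_isDiag_iff] at hd
    exact o.2 (congrArg cmk (Subtype.ext hd))
  set F : O → Fin n := fun o => C ⟨s(o.1.1.val, o.1.2.val), hndiag o⟩ with hF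
  letI : Fintype (G.induce {v | v ≠ r}).ConnectedComponent := Fintype.ofFinite _
  letI : Fintype O := Fintype.ofFinite _
  letI instFib : ∀ i : Fin n, Fintype {o : O // F o = i} := fun _ => Fintype.ofFinite _
  letI : ∀ c : (G.induce {v | v ≠ r}).ConnectedComponent, Fintype c.supp :=
    fun _ => Fintype.ofFinite _
  letI : Fintype {v : V // v ≠ r} := Fintype.ofFinite _
  letI : Fintype {o : ({v : V // v ≠ r} × {v : V // v ≠ r}) // cmk o.1 = cmk o.2} :=
    Fintype.ofFinite _
  have hCompk : Fintype.card (G.induce {v | v ≠ r}).ConnectedComponent = k := by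
    rw [← Nat.card_eq_fintype_card]; exact hcomp
  -- fiber bound
  have hfib : ∀ i : Fin n, Fintype.card {o : O // F o = i} ≤ k - 1 := by
    intro i
    have hinj : Function.Injective (fun s : {o : O // F o = i} => cmk s.1.1.1) := by
      rintro ⟨⟨⟨u1, v1⟩, ho1⟩, hi1⟩ ⟨⟨⟨u2, v2⟩, ho2⟩, hi2⟩ hcc
      change cmk u1 = cmk u2 at hcc
      change cmk u1 ≠ cmk v1 at ho1
      change cmk u2 ≠ cmk v2 at ho2
      by_cases hpq : (⟨s(u1.val, v1.val), hndiag ⟨(u1, v1), ho1⟩⟩ : {p : Sym2 V // ¬ p.IsDiag}) =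
          ⟨s(u2.val, v2.val), hndiag ⟨(u2, v2), ho2⟩⟩
      · have hs := Subtype.ext_iff.mp hpq
        rw [Sym2.eq_iff] at hs
        rcases hs with ⟨h1, h2⟩ | ⟨h1, h2⟩
        · exact Subtype.ext (Subtype.ext (Prod.ext (Subtype.ext h1) (Subtype.ext h2)))
        · exfalso
          have huv : u2 = v1 := Subtype.ext h2.symm
          exact ho1 (hcc.trans (congrArg cmk huv))
      · exfalso
        have hadj : R.conflictGraph.Adj ⟨s(u1.val, v1.val), hndiag ⟨(u1, v1), ho1⟩⟩
            ⟨s(u2.val, v2.val), hndiag ⟨(u2, v2), ho2⟩⟩ :=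
          ⟨hpq, u1.val, v1.val, u2.val, v2.val, s(r, (b (cmk u1)).val), rfl, rfl,
            hcross u1 v1 ho1, by rw [hcc]; exact hcross u2 v2 ho2⟩
        exact C.valid hadj (hi1.trans hi2.symm)
    have hcard_le : Fintype.card {o : O // F o = i} ≤ k :=
      hCompk ▸ Fintype.card_le_of_injective _ hinj
    have e_def : ∀ o : O, F ⟨(o.1.2, o.1.1), fun h => o.2 h.symm⟩ = F o := by
      intro o
      exact congrArg C (Subtype.ext Sym2.eq_swap)
    set e : {o : O // F o = i} → {o : O // F o = i} := fun s =>
      ⟨⟨(s.1.1.2, s.1.1.1), fun h => s.1.2 h.symm⟩, (e_def s.1).trans s.2⟩ with he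
    have hinv : Function.Involutive e := by
      intro s
      apply Subtype.ext
      apply Subtype.ext
      rfl
    have hfix : ∀ s, e s ≠ s := by
      intro s hs
      have h2 := congrArg (fun z : {o : O // F o = i} => z.1.1.1) hs
      exact s.1.2 ((congrArg cmk h2).symm)
    have heven : Even (Fintype.card {o : O // F o = i}) :=
      even_card_of_involutive e hinv hfix
    rcases hkodd with ⟨m, hm⟩
    rcases heven with ⟨j, hj⟩
    omega
  -- card of O via fibers
  have hOsum : Fintype.card O = ∑ i : Fin n, Fintype.card {o : O // F o = i} := by
    calc Fintype.card O = Fintype.card (Σ i : Fin n, {o : O // F o = i}) :=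
          Fintype.card_congr (Equiv.sigmaFiberEquiv F).symm
      _ = ∑ i : Fin n, Fintype.card {o : O // F o = i} := Fintype.card_sigma
  have hOle : Fintype.card O ≤ n * (k - 1) := by
    rw [hOsum]
    calc ∑ i : Fin n, Fintype.card {o : O // F o = i} ≤ ∑ _i : Fin n, (k - 1) :=
          Finset.sum_le_sum (fun i _ => hfib i)
      _ = n * (k - 1) := by simp [Finset.sum_const, mul_comm]
  -- card of V'
  have eV : {v : V // v ≠ r} ≃ Σ c : (G.induce {v | v ≠ r}).ConnectedComponent, c.supp :=
    { toFun := fun v => ⟨cmk v, ⟨v, rfl⟩⟩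
      invFun := fun s => s.2.1
      left_inv := fun v => rfl
      right_inv := by
        rintro ⟨c, ⟨v, hv⟩⟩
        have hv' : cmk v = c := hv
        subst hv'
        rfl }
  have hV't : Fintype.card {v : V // v ≠ r} = k * t := by
    calc Fintype.card {v : V // v ≠ r}
        = Fintype.card (Σ c : (G.induce {v | v ≠ r}).ConnectedComponent, c.supp) :=
          Fintype.card_congr eV
      _ = ∑ c : (G.induce {v | v ≠ r}).ConnectedComponent, Fintype.card c.supp :=
          Fintype.card_sigma
      _ = ∑ _c : (G.induce {v | v ≠ r}).ConnectedComponent, t := by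
          refine Finset.sum_congr rfl fun c _ => ?_
          rw [← Nat.card_eq_fintype_card]
          exact hsize c
      _ = k * t := by simp [Finset.sum_const, hCompk, mul_comm]
  -- card of the diagonal part
  have eD : {o : ({v : V // v ≠ r} × {v : V // v ≠ r}) // cmk o.1 = cmk o.2} ≃
      Σ c : (G.induce {v | v ≠ r}).ConnectedComponent, (c.supp × c.supp) :=
    { toFun := fun o => ⟨cmk o.1.1, ⟨⟨o.1.1, rfl⟩, ⟨o.1.2, o.2.symm⟩⟩⟩
      invFun := fun s => ⟨(s.2.1.1, s.2.2.1), (s.2.1.2 : cmk s.2.1.1 = s.1).trans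
        (s.2.2.2 : cmk s.2.2.1 = s.1).symm⟩
      left_inv := fun o => rfl
      right_inv := by
        rintro ⟨c, ⟨⟨a, ha⟩, ⟨bb, hbb⟩⟩⟩
        have ha' : cmk a = c := ha
        subst ha'
        rfl }
  have hDcard : Fintype.card {o : ({v : V // v ≠ r} × {v : V // v ≠ r}) //
      cmk o.1 = cmk o.2} = k * (t * t) := by
    calc Fintype.card {o : ({v : V // v ≠ r} × {v : V // v ≠ r}) // cmk o.1 = cmk o.2}
        = Fintype.card (Σ c : (G.induce {v | v ≠ r}).ConnectedComponent, (c.supp × c.supp)) :=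
          Fintype.card_congr eD
      _ = ∑ c : (G.induce {v | v ≠ r}).ConnectedComponent, Fintype.card (c.supp × c.supp) :=
          Fintype.card_sigma
      _ = ∑ _c : (G.induce {v | v ≠ r}).ConnectedComponent, t * t := by
          refine Finset.sum_congr rfl fun c _ => ?_
          rw [Fintype.card_prod, ← Nat.card_eq_fintype_card, hsize c]
      _ = k * (t * t) := by simp [Finset.sum_const, hCompk, mul_comm]
  -- the split
  have hsplit : Fintype.card ({v : V // v ≠ r} × {v : V // v ≠ r}) =
      Fintype.card {o : ({v : V // v ≠ r} × {v : V // v ≠ r}) // cmk o.1 = cmk o.2} +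
      Fintype.card O := by
    calc Fintype.card ({v : V // v ≠ r} × {v : V // v ≠ r})
        = Fintype.card ({o : ({v : V // v ≠ r} × {v : V // v ≠ r}) // cmk o.1 = cmk o.2} ⊕ O) :=
          (Fintype.card_congr (Equiv.sumCompl (fun o : ({v : V // v ≠ r} × {v : V // v ≠ r}) => cmk o.1 = cmk o.2))).symm
      _ = _ := Fintype.card_sum
  have hProd : Fintype.card ({v : V // v ≠ r} × {v : V // v ≠ r}) = (k * t) * (k * t) := by
    rw [Fintype.card_prod, hV't]
  -- final arithmetic
  obtain ⟨k', rfl⟩ : ∃ k', k = k' + 1 := ⟨k - 1, by omega⟩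
  rw [hProd, hDcard] at hsplit
  have hOcard : Fintype.card O = k' * ((k' + 1) * (t * t)) := by
    have : (k' + 1) * t * ((k' + 1) * t) = (k' + 1) * (t * t) + k' * ((k' + 1) * (t * t)) := by
      ring
    omega
  rw [hOcard] at hOle
  have hkk : (k' + 1) - 1 = k' := by omega
  rw [hkk] at hOle
  have hk' : 0 < k' := by omega
  have := Nat.le_of_mul_le_mul_left (by
    calc k' * ((k' + 1) * (t * t)) ≤ n * k' := hOle
      _ = k' * n := by ring) hk'
  calc (k' + 1) * t ^ 2 = (k' + 1) * (t * t) := by ring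
    _ ≤ n := this
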